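/- arXiv:1703.05296 — 9 statements merged into one kernel-verified Lean document; each statement's English description precedes it below -/
import Mathlib

section
/- The following identities hold in R: D·α − α·D = (α·t − 1)·x·α and D·β − β·D = β·x·(1 − t·β). (These compute the differential of the elements α and β.) -/
/-- The differential of `α` and `β`: `Dα - αD = (αt - 1)xα` and `Dβ - βD = βx(1 - tβ)`. -/
theorem d_alpha_d_beta {R : Type*} [Ring R] (s t x D : R)
    (hss : s * s = 0) (hst : s * t = 0) (hts : t * s = 0) (htt : t * t = t)
    (hu : IsUnit (1 + s * x))
    (hDD : D * D = 0) (hDs : D * s + s * D = 1 - t) (hDt : D * t = t * D)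
    (hMC : (D + x) * (D + x) = 0) :
    let α := Ring.inverse (1 + s * x)
    let β := Ring.inverse (1 + x * s)
    D * α - α * D = (α * t - 1) * x * α ∧
      D * β - β * D = β * x * (1 - t * β) := by
  intro α β
  have e1 : (1 + s * x) * α = 1 := Ring.mul_inverse_cancel _ hu
  have e2 : α * (1 + s * x) = 1 := Ring.inverse_mul_cancel _ hu
  -- 1 + x*s is a unit with inverse 1 - x*α*s
  have hu' : IsUnit (1 + x * s) := by
    refine ⟨⟨1 + x * s, 1 - x * α * s, ?_, ?_⟩, rfl⟩
    · linear_combination (norm := noncomm_ring) -(x * e1 * s)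
    · linear_combination (norm := noncomm_ring) -(x * e2 * s)
  have f1 : (1 + x * s) * β = 1 := Ring.mul_inverse_cancel _ hu'
  have f2 : β * (1 + x * s) = 1 := Ring.inverse_mul_cancel _ hu'
  have hMC' : D * x + x * D + x * x = 0 := by
    linear_combination (norm := noncomm_ring) hMC - hDD
  have K1 : (1 + s * x) * D - D * (1 + s * x) = (t - 1 - s * x) * x := by
    linear_combination (norm := noncomm_ring) s * hMC' - hDs * x
  have K2 : (1 + x * s) * D - D * (1 + x * s) = x * (1 - t + x * s) := by
    linear_combination (norm := noncomm_ring) x * hDs - hMC' * s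
  constructor
  · linear_combination (norm := noncomm_ring)
      α * K1 * α - e2 * (D * α) + (α * D) * e1 - e2 * (x * α)
  · linear_combination (norm := noncomm_ring)
      β * K2 * β - f2 * (D * β) + (β * D) * f1 + (β * x) * f1
end

section
/- (Abstract Homological Perturbation Lemma.) Set s' := α·s, t' := α·t·β and D' := D + x. Then the perturbed data again satisfy the relations of an abstract Hodge decomposition: s'·s' = 0, s'·t' = 0, t'·s' = 0, t'·t' = t', D'·t' = t'·D', and D'·s' + s'·D' = 1 − t'. -/
set_option maxHeartbeats 1000000


/-- Abstract Homological Perturbation Lemma: the perturbed data `s' = αs`, `t' = αtβ`,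
`D' = D + x` again satisfy the relations of an abstract Hodge decomposition. -/
theorem abstract_HPL {R : Type*} [Ring R] (s t x D : R)
    (hss : s * s = 0) (hst : s * t = 0) (hts : t * s = 0) (htt : t * t = t)
    (hu : IsUnit (1 + s * x))
    (hDD : D * D = 0) (hDs : D * s + s * D = 1 - t) (hDt : D * t = t * D)
    (hMC : (D + x) * (D + x) = 0) :
    let α := Ring.inverse (1 + s * x)
    let β := Ring.inverse (1 + x * s)
    let s' := α * s
    let t' := α * t * β
    let D' := D + x
    s' * s' = 0 ∧ s' * t' = 0 ∧ t' * s' = 0 ∧ t' * t' = t' ∧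
      D' * t' = t' * D' ∧ D' * s' + s' * D' = 1 - t' := by
  intro α β s' t' D'
  have ha1 : α * (1 + s * x) = 1 := Ring.inverse_mul_cancel _ hu
  have ha2 : (1 + s * x) * α = 1 := Ring.mul_inverse_cancel _ hu
  have hb0a : (1 + x * s) * (1 - x * α * s) = 1 := by
    linear_combination (norm := noncomm_ring) -(x * ha2 * s)
  have hb0b : (1 - x * α * s) * (1 + x * s) = 1 := by
    linear_combination (norm := noncomm_ring) -(x * ha1 * s)
  have hv : IsUnit (1 + x * s) := ⟨⟨1 + x * s, 1 - x * α * s, hb0a, hb0b⟩, rfl⟩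
  have hb1 : β * (1 + x * s) = 1 := Ring.inverse_mul_cancel _ hv
  have hb2 : (1 + x * s) * β = 1 := Ring.mul_inverse_cancel _ hv
  have hsa : s * α = s := by
    linear_combination (norm := noncomm_ring) s * ha2 - hss * (x * α)
  have hta : t * α = t := by
    linear_combination (norm := noncomm_ring) t * ha2 - hts * (x * α)
  have hbs : β * s = s := by
    linear_combination (norm := noncomm_ring) hb1 * s - (β * x) * hss
  have hbt : β * t = t := by
    linear_combination (norm := noncomm_ring) hb1 * t - (β * x) * hst
  have hab : α * s = s * β := by
    linear_combination (norm := noncomm_ring) ha1 * (s * β) - (α * s) * hb2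
  have h6 : (D + x) * (α * s) + (α * s) * (D + x) = 1 - α * t * β := by
    have hK : (1 + s * x) * ((D + x) * s) + (s * (D + x)) * (1 + x * s)
        = (1 + s * x) * (1 + x * s) - t := by
      linear_combination (norm := noncomm_ring) hDs + s * hMC * s - s * hDD * s
    linear_combination (norm := noncomm_ring)
      α * hK * β - ha1 * ((D + x) * (s * β)) + ((α * s) * (D + x)) * hb2
        + ha1 * ((1 + x * s) * β) + hb2 + (D + x) * hab
        - 2 * ((α * (s * (D + x))) * hb2)
  refine ⟨?_, ?_, ?_, ?_, ?_, h6⟩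

  · show (α * s) * (α * s) = 0
    linear_combination (norm := noncomm_ring) α * hsa * s + α * hss
  · show (α * s) * (α * t * β) = 0
    linear_combination (norm := noncomm_ring) α * hsa * (t * β) + α * hst * β
  · show (α * t * β) * (α * s) = 0
    linear_combination (norm := noncomm_ring)
      (α * t * β) * hab + (α * t) * hbs * β + α * hts * β
  · show (α * t * β) * (α * t * β) = α * t * β
    linear_combination (norm := noncomm_ring)
      (α * t) * hb1 * (α * t * β) + α * hta * (t * β) + α * htt * β
        - (α * t * β * x) * hsa * (t * β) - (α * t * β * x) * hst * β
  · show (D + x) * (α * t * β) = (α * t * β) * (D + x)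
    linear_combination (norm := noncomm_ring)
      (D + x) * h6 - h6 * (D + x) - hMC * (α * s) + (α * s) * hMC
end

section
/- Set ξ := t·x·α·t. Then for every element a of R one has the intertwining identity (D + x)·(α·t·a·t·β) − (α·t·a·t·β)·(D + x) = α·t·((D·a − a·D) + (ξ·a − a·ξ))·t·β. (Thus the map a ↦ α·a·β carries the transferred differential D + ξ on the corner t·R·t to the perturbed differential D + x on the corner (α·t·β)·R·(α·t·β).) -/
/-- The map `a ↦ α a β` intertwines the transferred differential `D + ξ` on the
corner `tRt` with the perturbed differential `D + x` on the corner `(αtβ)R(αtβ)`. -/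
theorem corner_intertwining {R : Type*} [Ring R] (s t x D : R)
    (hss : s * s = 0) (hst : s * t = 0) (hts : t * s = 0) (htt : t * t = t)
    (hu : IsUnit (1 + s * x))
    (hDD : D * D = 0) (hDs : D * s + s * D = 1 - t) (hDt : D * t = t * D)
    (hMC : (D + x) * (D + x) = 0) :
    let α := Ring.inverse (1 + s * x)
    let β := Ring.inverse (1 + x * s)
    let ξ := t * x * α * t
    ∀ a : R,
      (D + x) * (α * t * a * t * β) - (α * t * a * t * β) * (D + x) =
        α * t * ((D * a - a * D) + (ξ * a - a * ξ)) * t * β := by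
  intro α β ξ a
  have hξ : ξ = t * x * α * t := rfl
  -- basic inverse facts
  have f1 : α * (1 + s * x) = 1 := Ring.inverse_mul_cancel _ hu
  have f2 : (1 + s * x) * α = 1 := Ring.mul_inverse_cancel _ hu
  have hv : IsUnit (1 + x * s) := by
    refine ⟨⟨1 + x * s, 1 - x * α * s, ?_, ?_⟩, rfl⟩
    · have h : (1 + x * s) * (1 - x * α * s)
          = 1 + x * (1 - (1 + s * x) * α) * s := by noncomm_ring
      rw [h, f2, sub_self, mul_zero, zero_mul, add_zero]
    · have h : (1 - x * α * s) * (1 + x * s)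
          = 1 + x * (1 - α * (1 + s * x)) * s := by noncomm_ring
      rw [h, f1, sub_self, mul_zero, zero_mul, add_zero]
  have f3 : β * (1 + x * s) = 1 := Ring.inverse_mul_cancel _ hv
  have f4 : (1 + x * s) * β = 1 := Ring.mul_inverse_cancel _ hv
  -- x α = β x
  have hxa : x * α = β * x := by
    calc x * α = (β * (1 + x * s)) * (x * α) := by rw [f3, one_mul]
    _ = β * ((x * (1 + s * x)) * α) := by noncomm_ring
    _ = β * (x * ((1 + s * x) * α)) := by rw [mul_assoc x]
    _ = β * x := by rw [f2, mul_one]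
  have hvxa : (1 + x * s) * (x * α) = x := by
    rw [hxa, ← mul_assoc, f4, one_mul]
  have hβxu : β * (x * (1 + s * x)) = x := by
    rw [← mul_assoc, ← hxa, mul_assoc, f1, mul_one]
  -- Maurer-Cartan expanded
  have hxDx : D * x + x * D + x * x = 0 := by
    have h : D * x + x * D + x * x = (D + x) * (D + x) - D * D := by noncomm_ring
    rw [h, hMC, hDD, sub_zero]
  -- key commutator identities
  have key1 : (1 + s * x) * (D + x) - (D + x) * (1 + s * x)
      = t * x - (1 + x * s) * x := by
    have h : (1 + s * x) * (D + x) - (D + x) * (1 + s * x)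
        = s * (D * x + x * D + x * x) - (D * s + s * D) * x - x * s * x := by
      noncomm_ring
    rw [h, hxDx, hDs]; noncomm_ring
  have key2 : (D + x) * (1 + x * s) - (1 + x * s) * (D + x)
      = x * t - x * (1 + s * x) := by
    have h : (D + x) * (1 + x * s) - (1 + x * s) * (D + x)
        = (D * x + x * D + x * x) * s - x * (D * s + s * D) - x * s * x := by
      noncomm_ring
    rw [h, hxDx, hDs]; noncomm_ring
  -- commutator of D+x with α and β
  have hDα : (D + x) * α = α * (D + x) + α * (t * x - (1 + x * s) * x) * α := by
    have h : α * ((1 + s * x) * (D + x) - (D + x) * (1 + s * x)) * α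
        = (α * (1 + s * x)) * ((D + x) * α) - (α * (D + x)) * ((1 + s * x) * α) := by
      noncomm_ring
    rw [key1] at h
    rw [f1, f2, one_mul, mul_one] at h
    rw [h]; noncomm_ring
  have hDβ : β * (D + x) = (D + x) * β + β * (x * t - x * (1 + s * x)) * β := by
    have h : β * ((D + x) * (1 + x * s) - (1 + x * s) * (D + x)) * β
        = (β * (D + x)) * ((1 + x * s) * β) - (β * (1 + x * s)) * ((D + x) * β) := by
      noncomm_ring
    rw [key2] at h
    rw [f3, f4, one_mul, mul_one] at h
    rw [h]; noncomm_ring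
  -- main intertwining identities
  have h5 : (α * t) * (t * x * (α * t)) = α * (t * x) * (α * t) := by
    have h : (α * t) * (t * x * (α * t)) = α * (t * t) * (x * (α * t)) := by
      noncomm_ring
    rw [h, htt]; noncomm_ring
  have hA : (D + x) * (α * t) = (α * t) * (D + t * x * (α * t)) := by
    calc (D + x) * (α * t) = ((D + x) * α) * t := by rw [mul_assoc]
    _ = (α * (D + x) + α * (t * x - (1 + x * s) * x) * α) * t := by rw [hDα]
    _ = (α * (D * t) + α * (t * x) * (α * t))
        + (α * (x * t) - α * (((1 + x * s) * (x * α)) * t)) := by noncomm_ring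
    _ = (α * (D * t) + α * (t * x) * (α * t)) + (α * (x * t) - α * (x * t)) := by
        rw [hvxa]
    _ = α * (t * D) + α * (t * x) * (α * t) := by rw [hDt]; noncomm_ring
    _ = α * (t * D) + (α * t) * (t * x * (α * t)) := by rw [h5]
    _ = (α * t) * (D + t * x * (α * t)) := by noncomm_ring
  have h6 : (t * x * (α * t)) * (t * β) = t * (x * α) * (t * β) := by
    have h : (t * x * (α * t)) * (t * β) = t * x * (α * (t * t)) * β := by
      noncomm_ring
    rw [h, htt]; noncomm_ring
  have hB : (t * β) * (D + x) = (D + t * x * (α * t)) * (t * β) := by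
    calc (t * β) * (D + x) = t * (β * (D + x)) := by rw [mul_assoc]
    _ = t * ((D + x) * β + β * (x * t - x * (1 + s * x)) * β) := by rw [hDβ]
    _ = (t * (D * β) + t * (β * x) * (t * β))
        + (t * (x * β) - t * ((β * (x * (1 + s * x))) * β)) := by noncomm_ring
    _ = (t * (D * β) + t * (β * x) * (t * β)) + (t * (x * β) - t * (x * β)) := by
        rw [hβxu]
    _ = (t * D) * β + t * (x * α) * (t * β) := by rw [← hxa]; noncomm_ring
    _ = D * (t * β) + (t * x * (α * t)) * (t * β) := by rw [← hDt, h6]; noncomm_ring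
    _ = (D + t * x * (α * t)) * (t * β) := by noncomm_ring
  have expand : (D + x) * (α * t * a * t * β) - (α * t * a * t * β) * (D + x)
      = ((D + x) * (α * t)) * (a * (t * β)) - ((α * t) * a) * ((t * β) * (D + x)) := by
    noncomm_ring
  rw [expand, hA, hB, hξ]
  noncomm_ring
end

section
/- The element ξ := t·x·α·t satisfies t·x·α·t = t·β·x·t, and ξ is a Maurer–Cartan element: (D + t·x·α·t)·(D + t·x·α·t) = 0 (equivalently, D·ξ + ξ·D + ξ·ξ = 0). -/
/-- `ξ := t x α t` satisfies `t x α t = t β x t` and is a Maurer–Cartan element: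
`(D + ξ)² = 0`. -/
theorem xi_is_MC {R : Type*} [Ring R] (s t x D : R)
    (hss : s * s = 0) (hst : s * t = 0) (hts : t * s = 0) (htt : t * t = t)
    (hu : IsUnit (1 + s * x))
    (hDD : D * D = 0) (hDs : D * s + s * D = 1 - t) (hDt : D * t = t * D)
    (hMC : (D + x) * (D + x) = 0) :
    let α := Ring.inverse (1 + s * x)
    let β := Ring.inverse (1 + x * s)
    t * x * α * t = t * β * x * t ∧
      (D + t * x * α * t) * (D + t * x * α * t) = 0 := by
  intro α β
  have ha1 : (1 + s * x) * α = 1 := Ring.mul_inverse_cancel _ hu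
  have ha2 : α * (1 + s * x) = 1 := Ring.inverse_mul_cancel _ hu
  have hu' : IsUnit (1 + x * s) := by
    refine ⟨⟨1 + x * s, 1 - x * α * s, ?_, ?_⟩, rfl⟩
    · linear_combination (norm := noncomm_ring) -(x * ha1 * s)
    · linear_combination (norm := noncomm_ring) -(x * ha2 * s)
  have hb1 : (1 + x * s) * β = 1 := Ring.mul_inverse_cancel _ hu'
  have hb2 : β * (1 + x * s) = 1 := Ring.inverse_mul_cancel _ hu'
  constructor
  · linear_combination (norm := noncomm_ring) t * β * x * ha1 * t - t * hb2 * (x * α * t)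
  · have hDa : D * α = α * D - α * (x - t * x + s * (x * x)) * α := by
      linear_combination (norm := noncomm_ring)
        α * D * ha1 - ha2 * (D * α)
          - (α * hDs * (x * α) - α * s * hMC * α + α * s * hDD * α)
    have hB : D * (x * α) + x * α * D + x * α * t * (x * α) = 0 := by
      linear_combination (norm := noncomm_ring)
        hMC * α - hDD * α - x * hDa + x * ha2 * (x * α)
    linear_combination (norm := noncomm_ring)
      hDD + hDt * (x * α * t) - t * x * α * hDt + t * x * α * htt * (x * α * t) + t * hB * t
end

section
/- Set g := (1 + t − α·t)·β. Then g is a unit of R with inverse g⁻¹ = β⁻¹·(1 − t + α·t), where β⁻¹ = 1 + x·s; in particular (1 − t + α·t)·(1 + t − α·t) = 1 = (1 + t − α·t)·(1 − t + α·t). Moreover the following identities hold: (α·t·β)·g·(α·t·β) = α·t·β, t·g = t·β, and g⁻¹·t = α·t. -/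
/-- `g := (1 + t - αt)β` is a unit with inverse `g⁻¹ = β⁻¹ (1 - t + αt)` where
`β⁻¹ = 1 + xs`; in particular `(1 - t + αt)(1 + t - αt) = 1 = (1 + t - αt)(1 - t + αt)`.
Moreover `(αtβ) g (αtβ) = αtβ`, `t g = t β` and `g⁻¹ t = α t`. -/
theorem g_invertible_identities {R : Type*} [Ring R] (s t x : R)
    (hss : s * s = 0) (hst : s * t = 0) (hts : t * s = 0) (htt : t * t = t)
    (hu : IsUnit (1 + s * x)) :
    let α := Ring.inverse (1 + s * x)
    let β := Ring.inverse (1 + x * s)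
    let g := (1 + t - α * t) * β
    let ginv := (1 + x * s) * (1 - t + α * t)
    IsUnit g ∧ g * ginv = 1 ∧ ginv * g = 1 ∧
      (1 - t + α * t) * (1 + t - α * t) = 1 ∧
      (1 + t - α * t) * (1 - t + α * t) = 1 ∧
      (α * t * β) * g * (α * t * β) = α * t * β ∧
      t * g = t * β ∧ ginv * t = α * t := by
  intro α β g ginv
  have hαl : (1 + s * x) * α = 1 := Ring.mul_inverse_cancel _ hu
  have hαr : α * (1 + s * x) = 1 := Ring.inverse_mul_cancel _ hu
  have hsxα : s * x * α = 1 - α := by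
    calc s * x * α = (1 + s * x) * α - α := by noncomm_ring
    _ = 1 - α := by rw [hαl]
  have hαsx : α * (s * x) = 1 - α := by
    calc α * (s * x) = α * (1 + s * x) - α := by noncomm_ring
    _ = 1 - α := by rw [hαr]
  have hsa : s * α = s := by
    have h : s * α = s * ((1 + s * x) * α) - s * s * (x * α) := by noncomm_ring
    rw [h, hαl, hss]; noncomm_ring
  have hta : t * α = t := by
    have h : t * α = t * ((1 + s * x) * α) - t * s * (x * α) := by noncomm_ring
    rw [h, hαl, hts]; noncomm_ring
  -- explicit inverse of 1 + x*s
  have hb1 : (1 + x * s) * (1 - x * α * s) = 1 := by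
    calc (1 + x * s) * (1 - x * α * s)
        = 1 + x * s - x * α * s - x * (s * x * α) * s := by noncomm_ring
    _ = 1 + x * s - x * α * s - x * (1 - α) * s := by rw [hsxα]
    _ = 1 := by noncomm_ring
  have hb2 : (1 - x * α * s) * (1 + x * s) = 1 := by
    calc (1 - x * α * s) * (1 + x * s)
        = 1 + x * s - x * α * s - x * (α * (s * x)) * s := by noncomm_ring
    _ = 1 + x * s - x * α * s - x * (1 - α) * s := by rw [hαsx]
    _ = 1 := by noncomm_ring
  have u : Rˣ := ⟨1 + x * s, 1 - x * α * s, hb1, hb2⟩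
  have hβ : β = 1 - x * α * s :=
    Ring.inverse_unit (⟨1 + x * s, 1 - x * α * s, hb1, hb2⟩ : Rˣ)
  have hβl : (1 + x * s) * β = 1 := by rw [hβ]; exact hb1
  have hβr : β * (1 + x * s) = 1 := by rw [hβ]; exact hb2
  -- relations for a := α*t
  have htu : t * (α * t) = t := by rw [← mul_assoc, hta, htt]
  have hat : (α * t) * t = α * t := by rw [mul_assoc, htt]
  have huu : (α * t) * (α * t) = α * t := by
    calc (α * t) * (α * t) = α * ((t * α) * t) := by noncomm_ring
    _ = α * t := by rw [hta, htt]
  have key1 : (1 - t + α * t) * (1 + t - α * t) = 1 := by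
    have h : (1 - t + α * t) * (1 + t - α * t)
        = 1 - t * t + t * (α * t) + (α * t) * t - (α * t) * (α * t) := by noncomm_ring
    rw [h, htt, htu, hat, huu]; noncomm_ring
  have key2 : (1 + t - α * t) * (1 - t + α * t) = 1 := by
    have h : (1 + t - α * t) * (1 - t + α * t)
        = 1 - t * t + t * (α * t) + (α * t) * t - (α * t) * (α * t) := by noncomm_ring
    rw [h, htt, htu, hat, huu]; noncomm_ring
  have hgginv : g * ginv = 1 := by
    show ((1 + t - α * t) * β) * ((1 + x * s) * (1 - t + α * t)) = 1
    calc ((1 + t - α * t) * β) * ((1 + x * s) * (1 - t + α * t))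
        = (1 + t - α * t) * (β * (1 + x * s)) * (1 - t + α * t) := by noncomm_ring
    _ = 1 := by rw [hβr, mul_one, key2]
  have hginvg : ginv * g = 1 := by
    show ((1 + x * s) * (1 - t + α * t)) * ((1 + t - α * t) * β) = 1
    calc ((1 + x * s) * (1 - t + α * t)) * ((1 + t - α * t) * β)
        = (1 + x * s) * ((1 - t + α * t) * (1 + t - α * t)) * β := by noncomm_ring
    _ = 1 := by rw [key1, mul_one, hβl]
  have htg : t * g = t * β := by
    show t * ((1 + t - α * t) * β) = t * β
    calc t * ((1 + t - α * t) * β) = (t + t * t - t * (α * t)) * β := by noncomm_ring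
    _ = t * β := by rw [htt, htu]; noncomm_ring
  have hginvt : ginv * t = α * t := by
    show (1 + x * s) * (1 - t + α * t) * t = α * t
    calc (1 + x * s) * (1 - t + α * t) * t
        = t - t * t + α * (t * t) + x * (s * t) - x * ((s * t) * t)
            + x * ((s * α) * (t * t)) := by noncomm_ring
    _ = α * t := by rw [hsa, htt, hst]; noncomm_ring
  have hgαt : g * (α * t) = t := by
    rw [← hginvt, ← mul_assoc, hgginv, one_mul]
  have htβt : t * β * t = t := by
    rw [hβ]
    calc t * (1 - x * α * s) * t = t * t - t * (x * α) * (s * t) := by noncomm_ring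
    _ = t := by rw [htt, hst]; noncomm_ring
  have hAgA : (α * t * β) * g * (α * t * β) = α * t * β := by
    calc (α * t * β) * g * (α * t * β)
        = α * t * β * (g * (α * t)) * β := by noncomm_ring
    _ = α * (t * β * t) * β := by rw [hgαt]; noncomm_ring
    _ = α * t * β := by rw [htβt]
  exact ⟨⟨⟨g, ginv, hgginv, hginvg⟩, rfl⟩, hgginv, hginvg, key1, key2, hAgA, htg, hginvt⟩
end

section
/- The unit β gauges the Maurer–Cartan element x to β·x·t: one has the identity β·(D + x) = (D + β·x·t)·β in R. -/
/-- The unit `β` gauges the Maurer–Cartan element `x` to `β x t`: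
`β (D + x) = (D + β x t) β`. -/
theorem beta_gauges_x {R : Type*} [Ring R] (s t x D : R)
    (hss : s * s = 0) (hst : s * t = 0) (hts : t * s = 0) (htt : t * t = t)
    (hu : IsUnit (1 + s * x))
    (hDD : D * D = 0) (hDs : D * s + s * D = 1 - t) (hDt : D * t = t * D)
    (hMC : (D + x) * (D + x) = 0) :
    let β := Ring.inverse (1 + x * s)
    β * (D + x) = (D + β * x * t) * β := by
  intro β
  obtain ⟨v, hv⟩ := hu
  set u : R := ↑v⁻¹ with hu_def
  have hu1 : (1 + s * x) * u = 1 := by rw [← hv]; exact v.mul_inv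
  have hu2 : u * (1 + s * x) = 1 := by rw [← hv]; exact v.inv_mul
  have h1 : (1 + x * s) * (1 - x * u * s) = 1 := by
    have hsxu : s * x * u = 1 - u := by
      have h : s * x * u + u = 1 := by rw [← hu1]; noncomm_ring
      exact eq_sub_of_add_eq h
    calc (1 + x * s) * (1 - x * u * s)
        = 1 + x * s - x * u * s - x * (s * x * u) * s - x * (s * s) * (x * u * s)
          + x * (s * s) * (x * u * s) := by noncomm_ring
      _ = 1 := by rw [hsxu, hss]; noncomm_ring
  have h2 : (1 - x * u * s) * (1 + x * s) = 1 := by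
    have husx : u * (s * x) = 1 - u := by
      have h : u * (s * x) + u = 1 := by rw [← hu2]; noncomm_ring
      exact eq_sub_of_add_eq h
    calc (1 - x * u * s) * (1 + x * s)
        = 1 + x * s - x * u * s - x * (u * (s * x)) * s - x * u * (s * s) * (x * s)
          + x * u * (s * s) * (x * s) := by noncomm_ring
      _ = 1 := by rw [husx, hss]; noncomm_ring
  have hv : IsUnit (1 + x * s) := ⟨⟨1 + x * s, 1 - x * u * s, h1, h2⟩, rfl⟩
  have hβr : (1 + x * s) * β = 1 := Ring.mul_inverse_cancel _ hv
  have hβl : β * (1 + x * s) = 1 := Ring.inverse_mul_cancel _ hv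
  -- key identity: (D + x) * (1 + x*s) = (1 + x*s) * D + x * t
  have key : (D + x) * (1 + x * s) = (1 + x * s) * D + x * t := by
    have hDx : D * x = -(x * D) - x * x := by
      have h : D * x + (x * D + x * x) = 0 := by
        have : D * x + (x * D + x * x) = (D + x) * (D + x) - D * D := by noncomm_ring
        rw [this, hMC, hDD, sub_zero]
      have := eq_neg_of_add_eq_zero_left h
      rw [this]; noncomm_ring
    have hxDs : x * (D * s + s * D) = x * (1 - t) := by rw [hDs]
    calc (D + x) * (1 + x * s)
        = D + x + (D * x) * s + x * x * s := by noncomm_ring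
      _ = D + x - x * (D * s + s * D) + x * s * D := by rw [hDx]; noncomm_ring
      _ = D + x - x * (1 - t) + x * s * D := by rw [hxDs]
      _ = (1 + x * s) * D + x * t := by noncomm_ring
  -- conjugate
  calc β * (D + x)
      = β * ((D + x) * (1 + x * s)) * β := by
        conv_rhs => rw [mul_assoc β, mul_assoc (D + x), hβr, mul_one]
    _ = β * ((1 + x * s) * D + x * t) * β := by rw [key]
    _ = (β * (1 + x * s)) * D * β + β * x * t * β := by noncomm_ring
    _ = (D + β * x * t) * β := by rw [hβl]; noncomm_ring
end

section
/- (Gauge equivalence / decomposition theorem.) Set g := (1 + t − α·t)·β and ξ := t·x·α·t. Then g gauges the Maurer–Cartan element x to ξ: one has g·(D + x) = (D + ξ)·g in R; equivalently, g·x·g⁻¹ − (D·g − g·D)·g⁻¹ = t·x·α·t. -/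
/-- Gauge equivalence / decomposition theorem: `g := (1 + t - αt)β` gauges the
Maurer–Cartan element `x` to `ξ := t x α t`: one has `g (D + x) = (D + ξ) g`;
equivalently `g x g⁻¹ - (Dg - gD) g⁻¹ = t x α t`. -/
theorem g_gauges_x_to_xi {R : Type*} [Ring R] (s t x D : R)
    (hss : s * s = 0) (hst : s * t = 0) (hts : t * s = 0) (htt : t * t = t)
    (hu : IsUnit (1 + s * x))
    (hDD : D * D = 0) (hDs : D * s + s * D = 1 - t) (hDt : D * t = t * D)
    (hMC : (D + x) * (D + x) = 0) :
    let α := Ring.inverse (1 + s * x)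
    let β := Ring.inverse (1 + x * s)
    let g := (1 + t - α * t) * β
    let ξ := t * x * α * t
    g * (D + x) = (D + ξ) * g ∧
      g * x * Ring.inverse g - (D * g - g * D) * Ring.inverse g = t * x * α * t := by
  intro α β g ξ
  have hα1 : α * (1 + s * x) = 1 := Ring.inverse_mul_cancel _ hu
  have hα2 : (1 + s * x) * α = 1 := Ring.mul_inverse_cancel _ hu
  have hMC' : D * x + x * D + x * x = 0 := by
    linear_combination (norm := noncomm_ring) hMC - hDD
  -- explicit inverse of 1 + x*s
  have hvβ' : (1 + x * s) * (1 - x * α * s) = 1 := by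
    linear_combination (norm := noncomm_ring) -x * hα2 * s
  have hβv' : (1 - x * α * s) * (1 + x * s) = 1 := by
    linear_combination (norm := noncomm_ring) -x * hα1 * s
  have hβ : β = 1 - x * α * s := by
    show Ring.inverse (1 + x * s) = 1 - x * α * s
    exact Ring.inverse_unit ⟨1 + x * s, 1 - x * α * s, hvβ', hβv'⟩
  have hvβ : (1 + x * s) * β = 1 := by rw [hβ]; exact hvβ'
  have hβv : β * (1 + x * s) = 1 := by rw [hβ]; exact hβv'
  -- basic exchange identities
  have hxα : x * α = β * x := by
    rw [hβ]; linear_combination (norm := noncomm_ring) x * hα1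
  have htα : t * α = t := by
    linear_combination (norm := noncomm_ring) t * hα2 - hts * x * α
  -- differential exchange identities
  have hDv : D * (1 + x * s) = (1 + x * s) * D - x * (1 + x * s) + x * t := by
    linear_combination (norm := noncomm_ring) hMC' * s - x * hDs
  have hβD : β * D = D * β - β * x + β * x * t * β := by
    linear_combination (norm := noncomm_ring)
      β * hDv * β - β * D * hvβ + hβv * D * β - β * x * hvβ
  have hDu : D * (1 + s * x) = (1 + s * x) * D + (1 + s * x) * x - t * x := by
    linear_combination (norm := noncomm_ring) hDs * x - s * hMC'
  have hαD : α * D = D * α + x * α - α * t * x * α := by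
    linear_combination (norm := noncomm_ring)
      α * hDu * α - α * D * hα2 + hα1 * D * α + hα1 * x * α
  -- assembly for the first statement
  have e1 : β * (D + x) = D * β + β * x * t * β := by
    linear_combination (norm := noncomm_ring) hβD
  have e2 : (1 + t - α * t) * D
      = D + D * t - D * α * t - x * α * t + α * t * x * α * t := by
    linear_combination (norm := noncomm_ring) -hDt + α * hDt - hαD * t
  have e3 : t * (1 + t - α * t) = t := by
    linear_combination (norm := noncomm_ring) -htα * t
  have goal1 : (1 + t - α * t) * β * (D + x)
      = (D + t * x * α * t) * ((1 + t - α * t) * β) := by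
    linear_combination (norm := noncomm_ring)
      (1 + t - α * t) * e1 + e2 * β - t * x * α * e3 * β
        - hxα * t * β - t * hxα * t * β + α * t * hxα * t * β
  -- the inverse of g
  have hgh : (1 + t - α * t) * β * ((1 + x * s) * (1 - t + α * t)) = 1 := by
    linear_combination (norm := noncomm_ring)
      (1 + t - α * t) * hβv * (1 - t + α * t) + htα * t - α * htα * t
  have hhg : ((1 + x * s) * (1 - t + α * t)) * ((1 + t - α * t) * β) = 1 := by
    linear_combination (norm := noncomm_ring)
      (1 + x * s) * htα * t * β - (1 + x * s) * α * htα * t * β + hvβ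
  have hginv : Ring.inverse ((1 + t - α * t) * β) = (1 + x * s) * (1 - t + α * t) :=
    Ring.inverse_unit ⟨(1 + t - α * t) * β, (1 + x * s) * (1 - t + α * t), hgh, hhg⟩
  constructor
  · show (1 + t - α * t) * β * (D + x) = (D + t * x * α * t) * ((1 + t - α * t) * β)
    exact goal1
  · show (1 + t - α * t) * β * x * Ring.inverse ((1 + t - α * t) * β)
        - (D * ((1 + t - α * t) * β) - (1 + t - α * t) * β * D)
          * Ring.inverse ((1 + t - α * t) * β) = t * x * α * t
    rw [hginv]
    linear_combination (norm := noncomm_ring)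
      goal1 * ((1 + x * s) * (1 - t + α * t)) + t * x * α * t * hgh
end

section
/- Set ξ := t·x·α·t. Then the elements α·t and t·β intertwine the transferred differential D + ξ with the perturbed differential D + x and are mutually inverse comparison maps: (D + x)·(α·t) = (α·t)·(D + ξ), (t·β)·(D + x) = (D + ξ)·(t·β), (t·β)·(α·t) = t, and (α·t)·(t·β) = α·t·β. -/
/-- The elements `αt` and `tβ` intertwine the transferred differential `D + ξ` with
the perturbed differential `D + x` and are mutually inverse comparison maps. -/
theorem comparison_maps {R : Type*} [Ring R] (s t x D : R)
    (hss : s * s = 0) (hst : s * t = 0) (hts : t * s = 0) (htt : t * t = t)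
    (hu : IsUnit (1 + s * x))
    (hDD : D * D = 0) (hDs : D * s + s * D = 1 - t) (hDt : D * t = t * D)
    (hMC : (D + x) * (D + x) = 0) :
    let α := Ring.inverse (1 + s * x)
    let β := Ring.inverse (1 + x * s)
    let ξ := t * x * α * t
    (D + x) * (α * t) = (α * t) * (D + ξ) ∧
      (t * β) * (D + x) = (D + ξ) * (t * β) ∧
      (t * β) * (α * t) = t ∧
      (α * t) * (t * β) = α * t * β := by
  intro α β ξ
  have hu1 : (1 + s * x) * α = 1 := Ring.mul_inverse_cancel _ hu
  have hu2 : α * (1 + s * x) = 1 := Ring.inverse_mul_cancel _ hu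
  -- basic consequences
  have hαl : s * x * α = 1 - α := by
    have h : α + s * x * α = 1 := by rw [← hu1]; noncomm_ring
    linear_combination (norm := noncomm_ring) h
  have hαr : α * (s * x) = 1 - α := by
    have h : α + α * (s * x) = 1 := by rw [← hu2]; noncomm_ring
    linear_combination (norm := noncomm_ring) h
  have hsα : s * α = s := by
    have h : s * ((1 + s * x) * α) = s := by rw [hu1, mul_one]
    calc s * α = s * ((1 + s * x) * α) - s * s * (x * α) := by noncomm_ring
    _ = s := by rw [h, hss]; noncomm_ring
  have htα : t * α = t := by
    have h : t * ((1 + s * x) * α) = t := by rw [hu1, mul_one]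
    calc t * α = t * ((1 + s * x) * α) - t * s * (x * α) := by noncomm_ring
    _ = t := by rw [h, hts]; noncomm_ring
  -- β explicitly
  have hβ : β = 1 - x * α * s := by
    have p1 : (1 + x * s) * (1 - x * α * s) = 1 := by
      have e : (1 + x * s) * (1 - x * α * s)
          = 1 - x * α * s + x * s - x * (s * x * α) * s := by noncomm_ring
      rw [e, hαl]; noncomm_ring
    have p2 : (1 - x * α * s) * (1 + x * s) = 1 := by
      have e : (1 - x * α * s) * (1 + x * s)
          = 1 - x * α * s + x * s - x * (α * (s * x)) * s := by noncomm_ring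
      rw [e, hαr]; noncomm_ring
    have e : β = Ring.inverse ((⟨1 + x * s, 1 - x * α * s, p1, p2⟩ : Rˣ) : R) := rfl
    rw [e, Ring.inverse_unit]; rfl
  -- D relations
  have hDs' : D * s = 1 - t - s * D := by linear_combination (norm := noncomm_ring) hDs
  have hDx : D * x = -(x * D) - x * x := by
    have h : D * D + (D * x + (x * D + x * x)) = 0 := by rw [← hMC]; noncomm_ring
    rw [hDD, zero_add] at h
    linear_combination (norm := noncomm_ring) h
  have hc : D * (1 + s * x) = (1 + s * x) * D + (x - t * x + s * (x * x)) := by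
    have e1 : D * (1 + s * x) = D + (D * s) * x := by noncomm_ring
    rw [e1, hDs']
    have e2 : (1 - t - s * D) * x = x - t * x - s * (D * x) := by noncomm_ring
    rw [e2, hDx]; noncomm_ring
  have hDα : D * α = α * D - x * α + α * (t * (x * α)) := by
    refine hu.mul_left_cancel ?_
    have l1 : (1 + s * x) * (D * α)
        = D * ((1 + s * x) * α) - (x - t * x + s * (x * x)) * α := by
      have e : (1 + s * x) * D = D * (1 + s * x) - (x - t * x + s * (x * x)) := by
        rw [hc]; noncomm_ring
      calc (1 + s * x) * (D * α) = ((1 + s * x) * D) * α := by noncomm_ring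
      _ = (D * (1 + s * x) - (x - t * x + s * (x * x))) * α := by rw [e]
      _ = _ := by noncomm_ring
    rw [l1, hu1, mul_one]
    have r1 : (1 + s * x) * (α * D - x * α + α * (t * (x * α)))
        = ((1 + s * x) * α) * D - (1 + s * x) * (x * α)
          + ((1 + s * x) * α) * (t * (x * α)) := by noncomm_ring
    rw [r1, hu1]; noncomm_ring
  -- primed (right-associated) rewrite rules
  have hss1 : ∀ y : R, s * (s * y) = 0 := fun y => by rw [← mul_assoc, hss, zero_mul]
  have hst1 : ∀ y : R, s * (t * y) = 0 := fun y => by rw [← mul_assoc, hst, zero_mul]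
  have hts1 : ∀ y : R, t * (s * y) = 0 := fun y => by rw [← mul_assoc, hts, zero_mul]
  have htt1 : ∀ y : R, t * (t * y) = t * y := fun y => by rw [← mul_assoc, htt]
  have hsα1 : ∀ y : R, s * (α * y) = s * y := fun y => by rw [← mul_assoc, hsα]
  have htα1 : ∀ y : R, t * (α * y) = t * y := fun y => by rw [← mul_assoc, htα]
  have hsxα1 : ∀ y : R, s * (x * (α * y)) = y - α * y := fun y => by
    rw [← mul_assoc, ← mul_assoc, hαl]; noncomm_ring
  have hαsx1 : ∀ y : R, α * (s * (x * y)) = y - α * y := fun y => by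
    rw [← mul_assoc, ← mul_assoc, mul_assoc α s x, hαr]; noncomm_ring
  have hDt1 : ∀ y : R, D * (t * y) = t * (D * y) := fun y => by
    rw [← mul_assoc, hDt, mul_assoc]
  have hDs1 : ∀ y : R, D * (s * y) = y - t * y - s * (D * y) := fun y => by
    rw [← mul_assoc, hDs']; noncomm_ring
  have hDx1 : ∀ y : R, D * (x * y) = -(x * (D * y)) - x * (x * y) := fun y => by
    rw [← mul_assoc, hDx]; noncomm_ring
  have hDD1 : ∀ y : R, D * (D * y) = 0 := fun y => by rw [← mul_assoc, hDD, zero_mul]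
  have hDα1 : ∀ y : R, D * (α * y)
      = α * (D * y) - x * (α * y) + α * (t * (x * (α * y))) := fun y => by
    rw [← mul_assoc, hDα]; noncomm_ring
  refine ⟨?_, ?_, ?_, ?_⟩ <;>
  · show _ = _
    simp only [hβ, ξ, mul_add, add_mul, mul_sub, sub_mul, mul_one, one_mul, mul_neg,
      neg_mul, mul_assoc, hss, hst, hts, htt, hsα, htα, hss1, hst1, hts1, htt1, hsα1,
      htα1, hsxα1, hαr, hαsx1, hDt, hDt1, hDs', hDs1, hDx, hDx1, hDD, hDD1, hDα, hDα1,
      mul_zero, zero_mul, neg_neg, sub_zero, zero_sub, add_zero, zero_add]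
    all_goals noncomm_ring
end

section
/- (Homological Perturbation Lemma, module form.) The endomorphisms s' := α ∘ s and t' := α ∘ t ∘ β together with the perturbed differential d + x again form an abstract Hodge decomposition of V: s' ∘ s' = 0, s' ∘ t' = 0, t' ∘ s' = 0, t' ∘ t' = t', (d + x) ∘ t' = t' ∘ (d + x), and (d + x) ∘ s' + s' ∘ (d + x) = id − t'. -/
/-- Homological Perturbation Lemma, module form: `s' := α ∘ s`, `t' := α ∘ t ∘ β`
together with the perturbed differential `d + x` again form an abstract Hodge
decomposition of `V`. -/
theorem HPL_module {R : Type*} [CommRing R] {V : Type*} [AddCommGroup V] [Module R V]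
    (d s t x : Module.End R V)
    (hdd : d * d = 0)
    (hss : s * s = 0) (hst : s * t = 0) (hts : t * s = 0) (htt : t * t = t)
    (hds : d * s + s * d = 1 - t) (hdt : d * t = t * d)
    (hx : (d + x) * (d + x) = 0)
    (hu : IsUnit (1 + s * x)) :
    let α := Ring.inverse (1 + s * x)
    let β := Ring.inverse (1 + x * s)
    let s' := α * s
    let t' := α * t * β
    s' * s' = 0 ∧ s' * t' = 0 ∧ t' * s' = 0 ∧ t' * t' = t' ∧
      (d + x) * t' = t' * (d + x) ∧
      (d + x) * s' + s' * (d + x) = 1 - t' := by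
  intro α β s' t'
  have h1 : α * (1 + s * x) = 1 := Ring.inverse_mul_cancel _ hu
  have h2 : (1 + s * x) * α = 1 := Ring.mul_inverse_cancel _ hu
  have hv : IsUnit (1 + x * s) := by
    refine ⟨⟨1 + x * s, 1 - x * α * s, ?_, ?_⟩, rfl⟩
    · linear_combination (norm := noncomm_ring) -x * h2 * s
    · linear_combination (norm := noncomm_ring) -x * h1 * s
  have h3 : β * (1 + x * s) = 1 := Ring.inverse_mul_cancel _ hv
  have h4 : (1 + x * s) * β = 1 := Ring.mul_inverse_cancel _ hv
  have hsβ : α * s = s * β := by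
    linear_combination (norm := noncomm_ring) h1 * s * β - α * s * h4
  have hβx : β * x = x * α := by
    linear_combination (norm := noncomm_ring) h3 * x * α - β * x * h2
  have hsα : s * α = s := by
    linear_combination (norm := noncomm_ring) s * h2 - hss * x * α
  have hβs : β * s = s := by
    linear_combination (norm := noncomm_ring) h3 * s - β * x * hss
  have hα' : α = 1 - s * β * x := by
    linear_combination (norm := noncomm_ring) h2 + s * hβx
  have hβ' : β = 1 - x * α * s := by
    linear_combination (norm := noncomm_ring) h3 - hβx * s
  have g1 : s' * s' = 0 := by
    show α * s * (α * s) = 0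
    linear_combination (norm := noncomm_ring) α * hsα * s + α * hss
  have g2 : s' * t' = 0 := by
    show α * s * (α * t * β) = 0
    linear_combination (norm := noncomm_ring) α * hsα * (t * β) + α * hst * β
  have g3 : t' * s' = 0 := by
    show α * t * β * (α * s) = 0
    linear_combination (norm := noncomm_ring)
      α * t * β * hsβ + α * t * hβs * β + α * hts * β
  have g4 : t' * t' = t' := by
    show α * t * β * (α * t * β) = α * t * β
    linear_combination (norm := noncomm_ring)
      α * t * β * hα' * t * β + α * t * hβ' * t * β + α * htt * β
        - α * t * hβs * β * x * t * β - α * hts * β * x * t * β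
        - α * t * x * α * hst * β
  have hE : (1 + s * x) * ((α * s * d - s * d * β) - (α - 1 + t * β - α * t * β))
      * (1 + x * s) = 0 := by
    linear_combination (norm := noncomm_ring)
      h2 * (s * d) * (1 + x * s) - (1 + s * x) * (s * d) * h3 - h2 * (1 + x * s)
        - (1 + s * x) * t * h3 + h2 * (t * β) * (1 + x * s) + t * h3
        + s * hx * s - s * hdd * s - s * x * hds
  have hK : α * s * d - s * d * β = α - 1 + t * β - α * t * β := by
    linear_combination (norm := noncomm_ring)
      α * hE * β
        - h1 * (((α * s * d - s * d * β) - (α - 1 + t * β - α * t * β)) * ((1 + x * s) * β))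
        - ((α * s * d - s * d * β) - (α - 1 + t * β - α * t * β)) * h4
  have g6 : (d + x) * s' + s' * (d + x) = 1 - t' := by
    show (d + x) * (α * s) + α * s * (d + x) = 1 - α * t * β
    linear_combination (norm := noncomm_ring) (d + x) * hsβ + h4 + h1 + hds * β + hK
  have g5 : (d + x) * t' = t' * (d + x) := by
    show (d + x) * (α * t * β) = α * t * β * (d + x)
    have hH : (d + x) * (α * s) + α * s * (d + x) = 1 - α * t * β := g6
    linear_combination (norm := noncomm_ring)
      (d + x) * hH - hH * (d + x) - hx * (α * s) + α * s * hx
  exact ⟨g1, g2, g3, g4, g5, g6⟩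
end
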